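/- Let R be a reduced commutative unital ring and p ∈ R[x] a nonconstant polynomial. Then no logical power of p in R[x] is infinitely divisible by p. If in addition the leading coefficient of p is regular, then every logical power of p is a positive power of p. -/

import Mathlib

def IsLogPow {S : Type*} [CommRing S] (p f : S) : Prop :=
  p ∣ f ∧ (p - 1) ∣ (f - 1) ∧ ∀ g : S, g ∣ f → IsUnit g ∨ p ∣ g

open Polynomial in
theorem stmt_16 {R : Type*} [CommRing R] [IsReduced R]
    (p : R[X]) (hp : 0 < p.natDegree) :
    (∀ f : R[X], IsLogPow p f → ¬∀ n : ℕ, 1 ≤ n → p ^ n ∣ f) ∧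
      (p.leadingCoeff ∈ nonZeroDivisors R →
        ∀ f : R[X], IsLogPow p f → ∃ n : ℕ, 1 ≤ n ∧ f = p ^ n) := by
  classical
  have hp0 : p ≠ 0 := fun h => by simp [h] at hp
  have ha : p.leadingCoeff ≠ 0 := leadingCoeff_ne_zero.mpr hp0
  set m := p.natDegree with hm
  -- a prime ideal avoiding the leading coefficient
  obtain ⟨P, hPp, haP⟩ : ∃ P : Ideal R, P.IsPrime ∧ p.leadingCoeff ∉ P := by
    by_contra h
    push_neg at h
    exact ha (nilpotent_iff_mem_prime.mpr (fun J hJ => h J hJ)).eq_zero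
  haveI : P.IsPrime := hPp
  set k := Ideal.Quotient.mk P with hk
  have hka : k p.leadingCoeff ≠ 0 := by
    rwa [Ne, hk, Ideal.Quotient.eq_zero_iff_mem]
  have hcm : (p.map k).coeff m = k p.leadingCoeff := by
    rw [coeff_map, hm, coeff_natDegree]
  have hdm : m ≤ (p.map k).natDegree :=
    le_natDegree_of_ne_zero (by rw [hcm]; exact hka)
  -- (p-1) cannot become a unit after mapping to (R⧸P)[X]
  have hnotunit : ¬ IsUnit ((p - 1).map k) := by
    intro hu
    have h0 : ((p - 1).map k).natDegree = 0 := natDegree_eq_zero_of_isUnit hu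
    have hc : ((p - 1).map k).coeff m ≠ 0 := by
      rw [coeff_map, coeff_sub, coeff_one, if_neg (by omega : ¬ m = 0), sub_zero, hm,
        coeff_natDegree]
      exact hka
    have := le_natDegree_of_ne_zero hc
    omega
  constructor
  · -- Part 1
    intro f hf hdiv
    have hfmap : f.map k = 0 := by
      by_contra hne
      set n := (f.map k).natDegree + 1 with hn
      have hd : (p ^ n).map k ∣ f.map k := Polynomial.map_dvd k (hdiv n (by omega))
      rw [Polynomial.map_pow] at hd
      have h1 := natDegree_le_of_dvd hd hne
      rw [natDegree_pow] at h1
      have h2 : n ≤ n * (p.map k).natDegree :=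
        Nat.le_mul_of_pos_right n (by omega)
      omega
    apply hnotunit
    have hd : (p - 1).map k ∣ (f - 1).map k := Polynomial.map_dvd k hf.2.1
    rw [Polynomial.map_sub, Polynomial.map_sub, Polynomial.map_one, hfmap, zero_sub] at hd
    rw [Polynomial.map_sub, Polynomial.map_one]
    exact isUnit_of_dvd_unit hd isUnit_one.neg
  · -- Part 2
    intro hreg f hf
    obtain ⟨hpf, hpf1, hdiv3⟩ := hf
    haveI : Nontrivial R := by
      rcases subsingleton_or_nontrivial R with hs | hs
      · exact absurd (Subsingleton.elim p 0) hp0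
      · exact hs
    have hregpow : ∀ nn : ℕ, p.leadingCoeff ^ nn ∈ nonZeroDivisors R :=
      fun nn => pow_mem hreg nn
    have hreg' : ∀ nn : ℕ, p.leadingCoeff ^ nn ≠ 0 :=
      fun nn => nonZeroDivisors.ne_zero (hregpow nn)
    have hf0 : f ≠ 0 := by
      rintro rfl
      apply hnotunit
      have hu : IsUnit (p - 1) := isUnit_of_dvd_unit (by simpa using hpf1) isUnit_one.neg
      exact hu.map (mapRingHom k)
    -- degree additivity
    have key : ∀ (nn : ℕ) (c : R[X]), c ≠ 0 → f = p ^ nn * c →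
        nn * m + c.natDegree = f.natDegree := by
      intro nn c hc0 hfc
      have h1 : (p ^ nn).leadingCoeff * c.leadingCoeff ≠ 0 := by
        rw [leadingCoeff_pow' (hreg' nn)]
        intro h
        exact leadingCoeff_ne_zero.mpr hc0
          ((mem_nonZeroDivisors_iff.mp (hregpow nn)).2 c.leadingCoeff (by rwa [mul_comm] at h))
      rw [hfc, natDegree_mul' h1, natDegree_pow' (hreg' nn)]
    have hbound : ∀ nn : ℕ, p ^ nn ∣ f → nn ≤ f.natDegree := by
      intro nn hnn
      obtain ⟨c, hc⟩ := hnn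
      have hc0 : c ≠ 0 := by rintro rfl; rw [mul_zero] at hc; exact hf0 hc
      have := key nn c hc0 hc
      have hnm : nn ≤ nn * m := Nat.le_mul_of_pos_right nn hp
      omega
    have hbound1 : 1 ≤ f.natDegree := hbound 1 ((by simpa using hpf : p ^ 1 ∣ f))
    set n := Nat.findGreatest (fun j => p ^ j ∣ f) f.natDegree with hndef
    have hn1 : 1 ≤ n := Nat.le_findGreatest hbound1 ((by simpa using hpf : p ^ 1 ∣ f))
    have hn : p ^ n ∣ f := by
      have := Nat.findGreatest_spec (P := fun j => p ^ j ∣ f) hbound1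
        ((by simpa using hpf : p ^ 1 ∣ f))
      simpa [hndef] using this
    have hnsucc : ¬ p ^ (n + 1) ∣ f := fun h =>
      Nat.findGreatest_is_greatest (Nat.lt_succ_self n) (hbound _ h) h
    obtain ⟨q, hq⟩ := hn
    have hqf : q ∣ f := ⟨p ^ n, by rw [hq]; ring⟩
    rcases hdiv3 q hqf with hu | hpq
    · -- q is a unit, hence a constant u
      have hqc : ∀ i, i ≠ 0 → q.coeff i = 0 := fun i hi =>
        ((isUnit_iff_coeff_isUnit_isNilpotent.mp hu).2 i hi).eq_zero
      have hq0 : q = C (q.coeff 0) := by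
        ext i
        rcases eq_or_ne i 0 with rfl | hi
        · simp
        · simp [coeff_C, hi, hqc i hi]
      set u := q.coeff 0 with hu0
      have h2 : (p - 1) ∣ (p ^ n - 1) := by
        simpa using sub_dvd_pow_sub_pow p 1 n
      have h1 : (p - 1) ∣ C (u - 1) := by
        have heq : C (u - 1) = (f - 1) - (p ^ n - 1) * C u := by
          rw [hq, hq0, map_sub, map_one]; ring
        rw [heq]
        exact dvd_sub hpf1 (h2.mul_right _)
      have hu1 : u = 1 := by
        by_contra hne
        obtain ⟨h, hh⟩ := h1
        have hh0 : h ≠ 0 := by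
          rintro rfl
          rw [mul_zero, map_eq_zero_iff C C_injective, sub_eq_zero] at hh
          exact hne hh
        have hp1ne : (p - 1) ≠ 0 := by
          intro h0
          have : p.natDegree = 0 := by
            rw [show p = 1 by linear_combination h0, natDegree_one]
          omega
        have hdeg : (p - 1).natDegree = m := by
          simpa using (natDegree_sub_C (p := p) (a := (1 : R)))
        have hlc : (p - 1).leadingCoeff = p.leadingCoeff := by
          rw [leadingCoeff, hdeg, coeff_sub, coeff_one, if_neg (by omega : ¬ m = 0), sub_zero,
            hm, coeff_natDegree]
        have hmul : (p - 1).leadingCoeff * h.leadingCoeff ≠ 0 := by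
          rw [hlc]
          intro hz
          refine leadingCoeff_ne_zero.mpr hh0 ?_
          have h1r := mem_nonZeroDivisors_iff.mp (hregpow 1)
          rw [pow_one] at h1r
          exact h1r.2 h.leadingCoeff (by rwa [mul_comm] at hz)
        have hdeq := natDegree_mul' hmul
        rw [← hh, natDegree_C, hdeg] at hdeq
        omega
      refine ⟨n, hn1, ?_⟩
      rw [hq, hq0, hu1, map_one, mul_one]
    · exfalso
      obtain ⟨r, hr⟩ := hpq
      exact hnsucc ⟨r, by rw [hq, hr, pow_succ]; ring⟩
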